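/- arXiv:2304.09837 — 2 statements merged into one kernel-verified Lean document; each statement's English description precedes it below -/
import Mathlib

section
/- If X ~ N(0, σ²R²) and Y ~ N(0, σ²) are independent Gaussian random variables, then P(|X| ≥ |Y|) = (2/π) arctan R. -/
open MeasureTheory ProbabilityTheory Real Set Filter

private lemma strip_iff {R : ℝ} {θ : ℝ} (h1 : -(π/2) < θ) (h2 : θ < π/2) :
    |Real.sin θ| ≤ R * |Real.cos θ| ↔ |θ| ≤ Real.arctan R := by
  have hc : 0 < Real.cos θ := Real.cos_pos_of_mem_Ioo ⟨h1, h2⟩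
  have htan : |Real.tan θ| = |Real.sin θ| / Real.cos θ := by
    rw [Real.tan_eq_sin_div_cos, abs_div, abs_of_pos hc]
  have key : |Real.sin θ| ≤ R * |Real.cos θ| ↔ |Real.tan θ| ≤ R := by
    rw [htan, abs_of_pos hc, div_le_iff₀ hc, mul_comm]
  have e1 : Real.tan θ ≤ R ↔ θ ≤ Real.arctan R := by
    rw [← Real.arctan_strictMono.le_iff_le, Real.arctan_tan h1 h2]
  have e2 : -R ≤ Real.tan θ ↔ -Real.arctan R ≤ θ := by
    rw [← Real.arctan_strictMono.le_iff_le, Real.arctan_tan h1 h2, Real.arctan_neg]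
  rw [key, abs_le, abs_le, e1, e2]

private lemma angle_set_eq {R : ℝ} (hR : 0 < R) :
    Ioo (-π) π ∩ {θ : ℝ | |Real.sin θ| ≤ R * |Real.cos θ|}
      = Ioc (-π) (-π + Real.arctan R) ∪ Icc (-(Real.arctan R)) (Real.arctan R)
          ∪ Ico (π - Real.arctan R) π := by
  have ha0 : 0 < Real.arctan R := by
    have := Real.arctan_strictMono hR
    simpa using this
  have ha2 : Real.arctan R < π/2 := Real.arctan_lt_pi_div_two R
  have hπ : 0 < π := Real.pi_pos
  ext θ
  simp only [mem_inter_iff, mem_Ioo, mem_setOf_eq, mem_union, mem_Ioc, mem_Icc, mem_Ico]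
  constructor
  · rintro ⟨⟨hl, hr⟩, hcond⟩
    rcases lt_trichotomy θ (-(π/2)) with hθ | hθ | hθ
    · left; left
      refine ⟨hl, ?_⟩
      have h1 : -(π/2) < θ + π := by linarith
      have h2 : θ + π < π/2 := by linarith
      have hcond' : |Real.sin (θ+π)| ≤ R * |Real.cos (θ+π)| := by
        rw [Real.sin_add_pi, Real.cos_add_pi, abs_neg, abs_neg]; exact hcond
      have h3 := (strip_iff h1 h2).1 hcond'
      rw [abs_of_pos (by linarith : (0:ℝ) < θ + π)] at h3
      linarith
    · exfalso
      subst hθ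
      rw [Real.sin_neg, Real.cos_neg, Real.sin_pi_div_two, Real.cos_pi_div_two] at hcond
      simp at hcond
      linarith
    · rcases lt_trichotomy θ (π/2) with hθ' | hθ' | hθ'
      · left; right
        exact abs_le.1 ((strip_iff hθ hθ').1 hcond)
      · exfalso
        subst hθ'
        rw [Real.sin_pi_div_two, Real.cos_pi_div_two] at hcond
        simp at hcond
        linarith
      · right
        have h1 : -(π/2) < θ - π := by linarith
        have h2 : θ - π < π/2 := by linarith
        have hcond' : |Real.sin (θ-π)| ≤ R * |Real.cos (θ-π)| := by
          rw [Real.sin_sub_pi, Real.cos_sub_pi, abs_neg, abs_neg]; exact hcond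
        have h3 := (strip_iff h1 h2).1 hcond'
        rw [abs_of_neg (by linarith : θ - π < 0)] at h3
        exact ⟨by linarith, hr⟩
  · rintro ((⟨h1, h2⟩ | ⟨h1, h2⟩) | ⟨h1, h2⟩)
    · refine ⟨⟨h1, by linarith⟩, ?_⟩
      have hs1 : -(π/2) < θ + π := by linarith
      have hs2 : θ + π < π/2 := by linarith
      have h3 : |θ + π| ≤ Real.arctan R := by
        rw [abs_of_pos (by linarith : (0:ℝ) < θ + π)]; linarith
      have := (strip_iff hs1 hs2).2 h3
      rwa [Real.sin_add_pi, Real.cos_add_pi, abs_neg, abs_neg] at this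
    · refine ⟨⟨by linarith, by linarith⟩, ?_⟩
      have hs1 : -(π/2) < θ := by linarith
      have hs2 : θ < π/2 := by linarith
      exact (strip_iff hs1 hs2).2 (abs_le.2 ⟨h1, h2⟩)
    · refine ⟨⟨by linarith, h2⟩, ?_⟩
      have hs1 : -(π/2) < θ - π := by linarith
      have hs2 : θ - π < π/2 := by linarith
      have h3 : |θ - π| ≤ Real.arctan R := by
        rw [abs_of_neg (by linarith : θ - π < 0)]; linarith
      have := (strip_iff hs1 hs2).2 h3
      rwa [Real.sin_sub_pi, Real.cos_sub_pi, abs_neg, abs_neg] at this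

private lemma angle_set_volume {R : ℝ} (hR : 0 < R) :
    volume (Ioo (-π) π ∩ {θ : ℝ | |Real.sin θ| ≤ R * |Real.cos θ|})
      = ENNReal.ofReal (4 * Real.arctan R) := by
  have ha0 : 0 < Real.arctan R := by
    have := Real.arctan_strictMono hR
    simpa using this
  have ha2 : Real.arctan R < π/2 := Real.arctan_lt_pi_div_two R
  have hπ : 0 < π := Real.pi_pos
  rw [angle_set_eq hR]
  have hd1 : Disjoint (Ioc (-π) (-π + Real.arctan R) ∪ Icc (-(Real.arctan R)) (Real.arctan R))
      (Ico (π - Real.arctan R) π) := by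
    rw [Set.disjoint_union_left]
    constructor
    · rw [Set.disjoint_left]
      rintro x ⟨_, hx2⟩ ⟨hx3, _⟩
      linarith
    · rw [Set.disjoint_left]
      rintro x ⟨_, hx2⟩ ⟨hx3, _⟩
      linarith
  have hd2 : Disjoint (Ioc (-π) (-π + Real.arctan R)) (Icc (-(Real.arctan R)) (Real.arctan R)) := by
    rw [Set.disjoint_left]
    rintro x ⟨_, hx2⟩ ⟨hx3, _⟩
    linarith
  rw [measure_union hd1 measurableSet_Ico, measure_union hd2 measurableSet_Icc,
    Real.volume_Ioc, Real.volume_Icc, Real.volume_Ico,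
    ← ENNReal.ofReal_add (by linarith) (by linarith),
    ← ENNReal.ofReal_add (by linarith) (by linarith)]
  congr 1
  ring

private lemma pdf_polar (r θ : ℝ) :
    gaussianPDFReal 0 1 (r * Real.cos θ) * gaussianPDFReal 0 1 (r * Real.sin θ)
      = (2*π)⁻¹ * Real.exp (-r^2/2) := by
  have h2π : (0:ℝ) < 2*π := by positivity
  simp only [gaussianPDFReal, NNReal.coe_one, mul_one, sub_zero]
  rw [mul_mul_mul_comm, ← Real.exp_add, ← mul_inv, Real.mul_self_sqrt h2π.le]
  rw [show -(r * Real.cos θ)^2/2 + -(r * Real.sin θ)^2/2 = -r^2/2 from by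
    linear_combination (-(r^2)/2) * Real.sin_sq_add_cos_sq θ]

private lemma gauss_prod : (gaussianReal 0 1).prod (gaussianReal 0 1)
    = (volume.prod volume).withDensity
        (fun z : ℝ × ℝ => gaussianPDF 0 1 z.1 * gaussianPDF 0 1 z.2) := by
  refine Measure.prod_eq fun s t hs ht => ?_
  rw [withDensity_apply _ (hs.prod ht), ← Measure.prod_restrict,
    lintegral_prod_mul (measurable_gaussianPDF 0 1).aemeasurable
      (measurable_gaussianPDF 0 1).aemeasurable,
    ← gaussianReal_apply 0 one_ne_zero s, ← gaussianReal_apply 0 one_ne_zero t]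

private lemma radial_integral : ∫ r in Ioi (0:ℝ), r * Real.exp (-r^2/2) = 1 := by
  have h0 : ∀ x : ℝ, HasDerivAt (fun y : ℝ => -Real.exp (-y^2/2)) (x * Real.exp (-x^2/2)) x := by
    intro x
    have h1 : HasDerivAt (fun y : ℝ => -y^2/2) (-x) x := by
      have h1' := ((hasDerivAt_pow 2 x).neg.div_const 2)
      refine h1'.congr_deriv ?_
      push_cast
      ring
    have h3 := h1.exp.neg
    refine h3.congr_deriv ?_
    ring
  have hint : IntegrableOn (fun r : ℝ => r * Real.exp (-r^2/2)) (Ioi 0) := by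
    have heq : (fun x : ℝ => x * Real.exp (-x^2/2)) = fun x => x * Real.exp (-(1/2)*x^2) := by
      funext x; ring_nf
    rw [heq]
    exact (integrable_mul_exp_neg_mul_sq (by norm_num : (0:ℝ) < 1/2)).integrableOn
  have htend : Tendsto (fun y : ℝ => -Real.exp (-y^2/2)) atTop (nhds 0) := by
    have h1 : Tendsto (fun y : ℝ => -y^2/2) atTop atBot := by
      have h2 : Tendsto (fun y : ℝ => y^2/2) atTop atTop :=
        (tendsto_pow_atTop (by norm_num : (2:ℕ) ≠ 0)).atTop_div_const (by norm_num)
      have h4 := tendsto_neg_atTop_atBot.comp h2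
      have h5 : (fun y : ℝ => -y^2/2) = Neg.neg ∘ fun y : ℝ => y^2/2 := by
        funext y; simp [neg_div]
      rw [h5]; exact h4
    have h3 : Tendsto (fun y : ℝ => Real.exp (-y^2/2)) atTop (nhds 0) :=
      Real.tendsto_exp_atBot.comp h1
    simpa using h3.neg
  have hcont : ContinuousWithinAt (fun y : ℝ => -Real.exp (-y^2/2)) (Ici 0) 0 := by
    apply Continuous.continuousWithinAt
    fun_prop
  rw [integral_Ioi_of_hasDerivAt_of_tendsto hcont (fun x _ => h0 x) hint htend]
  simp

/-- If `X ~ N(0, σ²R²)` and `Y ~ N(0, σ²)` are independent, then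
`P(|X| ≥ |Y|) = (2/π) arctan R`. -/
theorem gaussian_abs_ratio (σ R : ℝ) (hσ : 0 < σ) (hR : 0 < R)
    (v₁ v₂ : NNReal) (hv₁ : (v₁ : ℝ) = σ^2 * R^2) (hv₂ : (v₂ : ℝ) = σ^2) :
    ((gaussianReal 0 v₁).prod (gaussianReal 0 v₂)) {p : ℝ × ℝ | |p.2| ≤ |p.1|}
      = ENNReal.ofReal (2/π * arctan R) := by
  have hπ : 0 < π := Real.pi_pos
  have hSmeas : MeasurableSet {p : ℝ × ℝ | |p.2| ≤ |p.1|} :=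
    measurableSet_le (by fun_prop) (by fun_prop)
  have hS'meas : MeasurableSet {p : ℝ × ℝ | |p.2| ≤ R * |p.1|} :=
    measurableSet_le (by fun_prop) (by fun_prop)
  have hTmeas : MeasurableSet {θ : ℝ | |Real.sin θ| ≤ R * |Real.cos θ|} :=
    measurableSet_le (by fun_prop) (by fun_prop)
  -- Step 0: reduce to standard gaussians
  have hmapR : Measure.map (fun x => (σ*R) * x) (gaussianReal 0 1) = gaussianReal 0 v₁ := by
    rw [gaussianReal_map_const_mul]
    congr 1
    · ring
    · apply NNReal.coe_injective
      push_cast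
      rw [hv₁]; ring
  have hmapσ : Measure.map (fun x => σ * x) (gaussianReal 0 1) = gaussianReal 0 v₂ := by
    rw [gaussianReal_map_const_mul]
    congr 1
    · ring
    · apply NNReal.coe_injective
      push_cast
      rw [hv₂]; ring
  rw [← hmapR, ← hmapσ,
    Measure.map_prod_map _ _ (measurable_const_mul _) (measurable_const_mul _),
    Measure.map_apply ((measurable_const_mul _).prodMap (measurable_const_mul _)) hSmeas]
  have hpre : Prod.map (fun x => (σ*R) * x) (fun x => σ * x) ⁻¹' {p : ℝ × ℝ | |p.2| ≤ |p.1|}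
      = {p : ℝ × ℝ | |p.2| ≤ R * |p.1|} := by
    ext ⟨a, b⟩
    simp only [mem_preimage, Prod.map, mem_setOf_eq, abs_mul, abs_of_pos hσ,
      abs_of_pos hR]
    rw [mul_assoc, mul_le_mul_iff_right₀ hσ]
  rw [hpre]
  -- Step 1: express as an integral of densities
  rw [gauss_prod, withDensity_apply _ hS'meas]
  have hfint : Integrable (fun p : ℝ × ℝ => gaussianPDFReal 0 1 p.1 * gaussianPDFReal 0 1 p.2)
      (volume.prod volume) :=
    Integrable.mul_prod (integrable_gaussianPDFReal 0 1) (integrable_gaussianPDFReal 0 1)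
  have hlint : ∫⁻ p in {p : ℝ × ℝ | |p.2| ≤ R * |p.1|},
        gaussianPDF 0 1 p.1 * gaussianPDF 0 1 p.2 ∂(volume.prod volume)
      = ENNReal.ofReal (∫ p in {p : ℝ × ℝ | |p.2| ≤ R * |p.1|},
          gaussianPDFReal 0 1 p.1 * gaussianPDFReal 0 1 p.2 ∂(volume.prod volume)) := by
    rw [ofReal_integral_eq_lintegral_ofReal hfint.restrict
      (ae_of_all _ fun p => mul_nonneg (gaussianPDFReal_nonneg _ _ _)
        (gaussianPDFReal_nonneg _ _ _))]
    simp_rw [gaussianPDF_def, ENNReal.ofReal_mul (gaussianPDFReal_nonneg 0 1 _)]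
  rw [hlint]
  -- Step 2: real integral via polar coordinates
  have hreal : ∫ p in {p : ℝ × ℝ | |p.2| ≤ R * |p.1|},
      gaussianPDFReal 0 1 p.1 * gaussianPDFReal 0 1 p.2 ∂(volume.prod volume)
      = 2/π * Real.arctan R := by
    rw [← integral_indicator hS'meas, ← Measure.volume_eq_prod,
      ← integral_comp_polarCoord_symm, polarCoord_target]
    have hptwise : EqOn
        (fun p : ℝ × ℝ => p.1 • ({p : ℝ × ℝ | |p.2| ≤ R * |p.1|}.indicator
          (fun q => gaussianPDFReal 0 1 q.1 * gaussianPDFReal 0 1 q.2) (polarCoord.symm p)))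
        (fun p : ℝ × ℝ => (p.1 * Real.exp (-p.1^2/2)) *
          ((2*π)⁻¹ * ({θ : ℝ | |Real.sin θ| ≤ R * |Real.cos θ|}.indicator
            (fun _ => (1:ℝ)) p.2)))
        (Ioi 0 ×ˢ Ioo (-π) π) := by
      rintro ⟨r, θ⟩ ⟨hr, hθ⟩
      simp only [polarCoord_symm_apply, smul_eq_mul]
      have hr' : (0:ℝ) < r := hr
      by_cases h : |Real.sin θ| ≤ R * |Real.cos θ|
      · have hmem : (r * Real.cos θ, r * Real.sin θ) ∈ {p : ℝ × ℝ | |p.2| ≤ R * |p.1|} := by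
          simp only [mem_setOf_eq, abs_mul, abs_of_pos hr']
          calc r * |Real.sin θ| ≤ r * (R * |Real.cos θ|) :=
                mul_le_mul_of_nonneg_left h hr'.le
            _ = R * (r * |Real.cos θ|) := by ring
        have hmem2 : θ ∈ {θ : ℝ | |Real.sin θ| ≤ R * |Real.cos θ|} := h
        rw [Set.indicator_of_mem hmem, Set.indicator_of_mem hmem2, pdf_polar]
        ring
      · have hmem : (r * Real.cos θ, r * Real.sin θ) ∉ {p : ℝ × ℝ | |p.2| ≤ R * |p.1|} := by
          simp only [mem_setOf_eq, abs_mul, abs_of_pos hr']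
          intro hc
          apply h
          have := (mul_le_mul_iff_right₀ hr').1 (by linarith [hc] :
            r * |Real.sin θ| ≤ r * (R * |Real.cos θ|))
          exact this
        have hmem2 : θ ∉ {θ : ℝ | |Real.sin θ| ≤ R * |Real.cos θ|} := h
        rw [Set.indicator_of_notMem hmem, Set.indicator_of_notMem hmem2]
        simp
    rw [setIntegral_congr_fun (measurableSet_Ioi.prod measurableSet_Ioo) hptwise,
      Measure.volume_eq_prod,
      setIntegral_prod_mul (fun r : ℝ => r * Real.exp (-r^2/2))
        (fun θ : ℝ => (2*π)⁻¹ * ({θ : ℝ | |Real.sin θ| ≤ R * |Real.cos θ|}.indicator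
          (fun _ => (1:ℝ)) θ)) (Ioi 0) (Ioo (-π) π),
      radial_integral, one_mul, integral_const_mul, setIntegral_indicator hTmeas]
    have : ∫ θ in Ioo (-π) π ∩ {θ : ℝ | |Real.sin θ| ≤ R * |Real.cos θ|}, (1:ℝ)
        = 4 * Real.arctan R := by
      rw [setIntegral_const, measureReal_def, angle_set_volume hR, smul_eq_mul, mul_one,
        ENNReal.toReal_ofReal]
      have ha0 : 0 < Real.arctan R := by
        have := Real.arctan_strictMono hR
        simpa using this
      linarith
    rw [this]
    field_simp
    ring
  rw [hreal]
end

section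
/- Let φ: ℝ → ℝ be a function that is affine linear on (-∞,0] and on [0,∞) but not affine linear on ℝ, let w ≥ 1, and let θ_L, θ_T ∈ ℝ^w, θ'_L ∈ ℝ^w, θ'_T ∈ ℝ. Suppose all coordinates of θ_L are nonzero. Then the function f: ℝ → ℝ given by f(x) = θ'_T + ⟨θ'_L, φ^w(θ_T + x·θ_L)⟩ (where φ^w applies φ coordinatewise) is piecewise affine-linear with at most w points of non-linearity. -/
open Set

/-- A one-hidden-layer network with a piecewise-linear activation (affine on each half-line,
but not globally affine) and all input weights nonzero is piecewise affine with at most `w`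
points of non-linearity. -/
theorem pl_network_nonlinearity (φ : ℝ → ℝ)
    (hneg : ∃ a b : ℝ, ∀ x ≤ (0:ℝ), φ x = a * x + b)
    (hpos : ∃ a b : ℝ, ∀ x ≥ (0:ℝ), φ x = a * x + b)
    (hnotaff : ¬ ∃ a b : ℝ, ∀ x : ℝ, φ x = a * x + b)
    (w : ℕ) (hw : 1 ≤ w)
    (θL θT θL' : Fin w → ℝ) (θT' : ℝ) (hθL : ∀ i, θL i ≠ 0)
    (f : ℝ → ℝ) (hf : ∀ x, f x = θT' + ∑ i, θL' i * φ (θT i + x * θL i))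
    (D : Set ℝ)
    (hD : D = {x₀ : ℝ | ¬ ∃ U ∈ nhds x₀, ∃ a b : ℝ, ∀ x ∈ U, f x = a * x + b}) :
    D.Finite ∧ D.ncard ≤ w := by
  obtain ⟨an, bn, hn⟩ := hneg
  obtain ⟨ap, bp, hp⟩ := hpos
  have key : D ⊆ Set.range (fun i : Fin w => -θT i / θL i) := by
    intro x₀ hx₀
    by_contra hx
    rw [hD] at hx₀
    apply hx₀
    have hs : ∀ i, θT i + x₀ * θL i ≠ 0 := by
      intro i h
      exact hx ⟨i, by rw [div_eq_iff (hθL i)]; linarith⟩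
    set a : Fin w → ℝ := fun i => if θT i + x₀ * θL i < 0 then an else ap with ha
    set b : Fin w → ℝ := fun i => if θT i + x₀ * θL i < 0 then bn else bp with hb
    set U : Set ℝ := ⋂ i, {x | if θT i + x₀ * θL i < 0 then θT i + x * θL i < 0
        else 0 < θT i + x * θL i} with hU
    refine ⟨U, ?_, ∑ i, θL' i * a i * θL i, θT' + ∑ i, θL' i * (a i * θT i + b i), ?_⟩
    · rw [hU]
      refine Filter.iInter_mem.2 fun i => ?_
      by_cases hi : θT i + x₀ * θL i < 0
      · simp only [hi, if_true]
        exact IsOpen.mem_nhds (isOpen_lt (by continuity) continuous_const) hi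
      · simp only [hi, if_false]
        have : 0 < θT i + x₀ * θL i := lt_of_le_of_ne (not_lt.1 hi) (Ne.symm (hs i))
        exact IsOpen.mem_nhds (isOpen_lt continuous_const (by continuity)) this
    · intro x hxU
      rw [hf]
      have hφ : ∀ i, φ (θT i + x * θL i) = a i * (θT i + x * θL i) + b i := by
        intro i
        have hxi := Set.mem_iInter.1 hxU i
        by_cases hi : θT i + x₀ * θL i < 0
        · simp only [hi, if_true, Set.mem_setOf_eq] at hxi
          simp only [ha, hb, hi, if_true]
          exact hn _ hxi.le
        · simp only [hi, if_false, Set.mem_setOf_eq] at hxi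
          simp only [ha, hb, hi, if_false]
          exact hp _ hxi.le
      simp only [hφ]
      rw [Finset.sum_congr rfl (fun i _ => show θL' i * (a i * (θT i + x * θL i) + b i)
        = θL' i * a i * θL i * x + θL' i * (a i * θT i + b i) by ring),
        Finset.sum_add_distrib, ← Finset.sum_mul]
      ring
  have hfin : D.Finite := (Set.finite_range _).subset key
  refine ⟨hfin, le_trans (Set.ncard_le_ncard key (Set.finite_range _)) ?_⟩
  calc (Set.range fun i : Fin w => -θT i / θL i).ncard
      = ((fun i : Fin w => -θT i / θL i) '' Set.univ).ncard := by rw [Set.image_univ]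
    _ ≤ (Set.univ : Set (Fin w)).ncard := Set.ncard_image_le (Set.finite_univ)
    _ = w := by simp [Set.ncard_univ]
end
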